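/- Let b > 0 and let α : [0,b] → ℝ be differentiable with 0 < α(t) < 1 on [0,b] and |α'(t)| ≤ L. With κ = Γ(α(0))·Γ(1−α(0)), the function g(t) = (1/κ) ∫₀¹ (tz)^{α(0)−α(tz)} (1−z)^{α(0)−1} z^{−α(0)} dz is differentiable on (0,b), and for every ε with 0 < ε < 1−α(0) there is a constant C_ε > 0 such that |g'(t)| ≤ C_ε · t^{−ε} for all t ∈ (0,b); in particular g' ∈ L¹(0,b). -/

import Mathlib

open MeasureTheory Set Filter intervalIntegral
open Real

lemma aux_rpow_mul_abs_log_le {d z : ℝ} (hd : 0 < d) (hz : 0 < z) (hz1 : z ≤ 1) :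
    z ^ d * |Real.log z| ≤ 1 / d := by
  have hlz : Real.log z ≤ 0 := Real.log_nonpos hz.le hz1
  rw [abs_of_nonpos hlz]
  have h1 : Real.log z⁻¹ ≤ (z⁻¹) ^ d / d := Real.log_le_rpow_div (by positivity) hd
  rw [Real.log_inv] at h1
  have h2 : (z⁻¹ : ℝ) ^ d = (z ^ d)⁻¹ := Real.inv_rpow hz.le d
  rw [h2] at h1
  have hzd : (0:ℝ) < z ^ d := Real.rpow_pos_of_pos hz d
  calc z ^ d * -Real.log z ≤ z ^ d * ((z ^ d)⁻¹ / d) := mul_le_mul_of_nonneg_left h1 hzd.le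
    _ = 1 / d := by field_simp

lemma aux_mul_abs_log_le {b u : ℝ} (hu : 0 < u) (hub : u ≤ b) :
    u * |Real.log u| ≤ 1 + b ^ 2 := by
  rcases le_or_gt u 1 with h | h
  · have h0 := aux_rpow_mul_abs_log_le one_pos hu h
    rw [Real.rpow_one] at h0
    nlinarith [sq_nonneg b]
  · have hlog : 0 ≤ Real.log u := Real.log_nonneg h.le
    rw [abs_of_nonneg hlog]
    have h1 : Real.log u ≤ u := (Real.log_le_sub_one_of_pos hu).trans (by linarith)
    have hb1 : (1:ℝ) ≤ b := h.le.trans hub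
    nlinarith

lemma aux_beta_integrable {p q : ℝ} (hp : -1 < p) (hq : -1 < q) :
    IntervalIntegrable (fun z : ℝ => z ^ p * (1 - z) ^ q) volume 0 1 := by
  have hmeas : ∀ c d : ℝ, AEStronglyMeasurable (fun z : ℝ => z ^ p * (1 - z) ^ q)
      (volume.restrict (Set.uIoc c d)) := by
    intro c d
    apply Measurable.aestronglyMeasurable
    fun_prop
  have h1 : IntervalIntegrable (fun z : ℝ => z ^ p * (1 - z) ^ q) volume 0 (1/2) := by
    have hint : IntervalIntegrable (fun z : ℝ => ((1/2 : ℝ) ^ q + 1) * z ^ p) volume 0 (1/2) :=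
      (intervalIntegrable_rpow' hp).const_mul _
    refine hint.mono_fun (hmeas 0 (1/2)) ?_
    filter_upwards [ae_restrict_mem measurableSet_uIoc] with z hz
    rw [uIoc_of_le (by norm_num : (0:ℝ) ≤ 1/2)] at hz
    obtain ⟨hz0, hz2⟩ := hz
    have h1z' : (0:ℝ) < 1 - z := by linarith
    have hzp : (0:ℝ) ≤ z ^ p := (Real.rpow_pos_of_pos hz0 p).le
    have hkey : (1 - z) ^ q ≤ (1/2 : ℝ) ^ q + 1 := by
      rcases le_or_gt 0 q with hq0 | hq0
      · have h2 : (1 - z) ^ q ≤ (1:ℝ) ^ q := Real.rpow_le_rpow h1z'.le (by linarith) hq0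
        rw [Real.one_rpow] at h2
        have : (0:ℝ) ≤ (1/2:ℝ) ^ q := (Real.rpow_pos_of_pos (by norm_num) q).le
        linarith
      · have h1z : (1/2 : ℝ) ≤ 1 - z := by linarith
        have := Real.rpow_le_rpow_of_nonpos (by norm_num : (0:ℝ) < 1/2) h1z hq0.le
        linarith
    simp only [Real.norm_eq_abs]
    rw [abs_of_nonneg (by positivity), abs_of_nonneg (by positivity)]
    calc z ^ p * (1 - z) ^ q ≤ z ^ p * ((1/2 : ℝ) ^ q + 1) :=
          mul_le_mul_of_nonneg_left hkey hzp
      _ = ((1/2 : ℝ) ^ q + 1) * z ^ p := by ring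
  have h2 : IntervalIntegrable (fun z : ℝ => z ^ p * (1 - z) ^ q) volume (1/2) 1 := by
    have hint0 : IntervalIntegrable (fun z : ℝ => z ^ q) volume 0 (1/2) :=
      intervalIntegrable_rpow' hq
    have hint1 : IntervalIntegrable (fun z : ℝ => (1 - z) ^ q) volume (1/2) 1 := by
      have := hint0.comp_sub_left 1
      norm_num at this
      exact this.symm
    have hint : IntervalIntegrable (fun z : ℝ => ((1/2 : ℝ) ^ p + 1) * (1 - z) ^ q) volume (1/2) 1 :=
      hint1.const_mul _
    refine hint.mono_fun (hmeas (1/2) 1) ?_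
    filter_upwards [ae_restrict_mem measurableSet_uIoc] with z hz
    rw [uIoc_of_le (by norm_num : (1/2:ℝ) ≤ 1)] at hz
    obtain ⟨hz0, hz2⟩ := hz
    have hz0' : (0:ℝ) < z := by linarith
    have h1z : (0:ℝ) ≤ 1 - z := by linarith
    have hkey : z ^ p ≤ (1/2 : ℝ) ^ p + 1 := by
      rcases le_or_gt 0 p with hp0 | hp0
      · have h := Real.rpow_le_rpow hz0'.le hz2 hp0
        rw [Real.one_rpow] at h
        have : (0:ℝ) ≤ (1/2:ℝ) ^ p := (Real.rpow_pos_of_pos (by norm_num) p).le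
        linarith
      · have := Real.rpow_le_rpow_of_nonpos (by norm_num : (0:ℝ) < 1/2) hz0.le hp0.le
        linarith
    have hq' : (0:ℝ) ≤ (1 - z) ^ q := Real.rpow_nonneg h1z q
    simp only [Real.norm_eq_abs]
    rw [abs_of_nonneg (by positivity), abs_of_nonneg (by positivity)]
    exact mul_le_mul_of_nonneg_right hkey hq'
  exact h1.trans h2

lemma aux_hasDeriv (b : ℝ) (α α' : ℝ → ℝ)
    (hα_diff : ∀ u ∈ Icc (0:ℝ) b, HasDerivAt α (α' u) u)
    (z t : ℝ) (hz0 : 0 < z) (hz1 : z ≤ 1) (ht : 0 < t) (htb : t ≤ b) :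
    HasDerivAt (fun x => (x*z) ^ (α 0 - α (x*z)) * (1-z) ^ (α 0 - 1) * z ^ (-(α 0)))
      (((t*z) ^ (α 0 - α (t*z)) * (-(α' (t*z)) * Real.log (t*z) + (α 0 - α (t*z)) / (t*z)) * z) *
        ((1-z) ^ (α 0 - 1) * z ^ (-(α 0)))) t := by
  set u := t * z with hu_def
  have hu : 0 < u := mul_pos ht hz0
  have hub : u ≤ b := by
    calc u = t * z := rfl
      _ ≤ t * 1 := mul_le_mul_of_nonneg_left hz1 ht.le
      _ = t := mul_one t
      _ ≤ b := htb
  have hA : HasDerivAt α (α' u) u := hα_diff u ⟨hu.le, hub⟩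
  have hlog : HasDerivAt Real.log u⁻¹ u := Real.hasDerivAt_log hu.ne'
  have hmul : HasDerivAt (fun v => Real.log v * (α 0 - α v))
      (u⁻¹ * (α 0 - α u) + Real.log u * (0 - α' u)) u :=
    hlog.mul ((hasDerivAt_const u (α 0)).sub hA)
  have hexp : HasDerivAt (fun v => Real.exp (Real.log v * (α 0 - α v)))
      (Real.exp (Real.log u * (α 0 - α u)) * (u⁻¹ * (α 0 - α u) + Real.log u * (0 - α' u))) u :=
    hmul.exp
  have heq : (fun v => v ^ (α 0 - α v)) =ᶠ[nhds u] fun v => Real.exp (Real.log v * (α 0 - α v)) := by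
    filter_upwards [eventually_gt_nhds hu] with v hv
    exact Real.rpow_def_of_pos hv _
  have H : HasDerivAt (fun v => v ^ (α 0 - α v))
      (Real.exp (Real.log u * (α 0 - α u)) * (u⁻¹ * (α 0 - α u) + Real.log u * (0 - α' u))) u :=
    hexp.congr_of_eventuallyEq heq
  have hx : HasDerivAt (fun x => x * z) z t := by
    simpa using (hasDerivAt_id t).mul_const z
  have H2 : HasDerivAt (fun x => (x*z) ^ (α 0 - α (x*z)))
      ((Real.exp (Real.log u * (α 0 - α u)) * (u⁻¹ * (α 0 - α u) + Real.log u * (0 - α' u))) * z)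
      t := by have h := H.comp t hx; exact h
  have H3 := (H2.mul_const ((1-z) ^ (α 0 - 1))).mul_const (z ^ (-(α 0)))
  refine H3.congr_deriv ?_
  rw [← Real.rpow_def_of_pos hu]
  field_simp
  ring
lemma aux_est (b L : ℝ) (hb : 0 < b) (α α' : ℝ → ℝ)
    (hα_diff : ∀ u ∈ Icc (0:ℝ) b, HasDerivAt α (α' u) u)
    (hα_range : ∀ u ∈ Icc (0:ℝ) b, 0 < α u ∧ α u < 1)
    (hα_lip : ∀ u ∈ Icc (0:ℝ) b, |α' u| ≤ L)
    (z t : ℝ) (hz0 : 0 < z) (hz1 : z ≤ 1) (ht : 0 < t) (htb : t ≤ b) :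
    |((t*z) ^ (α 0 - α (t*z)) * (-(α' (t*z)) * Real.log (t*z) + (α 0 - α (t*z)) / (t*z)) * z) *
        ((1-z) ^ (α 0 - 1) * z ^ (-(α 0)))| ≤
      Real.exp (L * (1 + b ^ 2)) * L * (|Real.log t| + (1 / (1 - α 0) + 1)) *
        (1-z) ^ (α 0 - 1) := by
  have h0b : (0:ℝ) ∈ Icc (0:ℝ) b := ⟨le_refl 0, hb.le⟩
  obtain ⟨hα0pos, hα0lt⟩ := hα_range 0 h0b
  have hL : 0 ≤ L := (abs_nonneg _).trans (hα_lip 0 h0b)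
  set u := t * z with hu_def
  have hu : 0 < u := mul_pos ht hz0
  have hub : u ≤ b := le_trans (by nlinarith : u ≤ t) htb
  have huI : u ∈ Icc (0:ℝ) b := ⟨hu.le, hub⟩
  set A := Real.exp (L * (1 + b ^ 2)) with hA_def
  -- Lipschitz bound
  have hlip : |α 0 - α u| ≤ L * u := by
    have := Convex.norm_image_sub_le_of_norm_hasDerivWithin_le
      (f := α) (f' := α') (s := Icc (0:ℝ) b)
      (fun x hx => (hα_diff x hx).hasDerivWithinAt)
      (fun x hx => by simpa using hα_lip x hx) (convex_Icc 0 b) h0b huI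
    rw [Real.norm_eq_abs, Real.norm_eq_abs, abs_sub_comm] at this
    simpa [abs_of_nonneg hu.le] using this
  -- rpow bound
  have hexp_bound : u ^ (α 0 - α u) ≤ A := by
    rw [Real.rpow_def_of_pos hu]
    apply Real.exp_le_exp.2
    calc Real.log u * (α 0 - α u) ≤ |Real.log u * (α 0 - α u)| := le_abs_self _
      _ = |α 0 - α u| * |Real.log u| := by rw [abs_mul]; ring
      _ ≤ (L * u) * |Real.log u| := mul_le_mul_of_nonneg_right hlip (abs_nonneg _)
      _ = L * (u * |Real.log u|) := by ring
      _ ≤ L * (1 + b ^ 2) := mul_le_mul_of_nonneg_left (aux_mul_abs_log_le hu hub) hL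
  have hE0 : (0:ℝ) ≤ u ^ (α 0 - α u) := (Real.rpow_pos_of_pos hu _).le
  -- log split
  have hlog_split : |Real.log u| ≤ |Real.log t| + |Real.log z| := by
    rw [hu_def, Real.log_mul ht.ne' hz0.ne']
    exact abs_add_le _ _
  -- inner bound
  have hα'u : |α' u| ≤ L := hα_lip u huI
  have hinner : |(-(α' u)) * Real.log u + (α 0 - α u) / u| ≤
      L * (|Real.log t| + |Real.log z|) + L := by
    calc |(-(α' u)) * Real.log u + (α 0 - α u) / u|
        ≤ |(-(α' u)) * Real.log u| + |(α 0 - α u) / u| := abs_add_le _ _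
      _ = |α' u| * |Real.log u| + |α 0 - α u| / u := by
          rw [abs_mul, abs_neg, abs_div, abs_of_pos hu]
      _ ≤ L * (|Real.log t| + |Real.log z|) + (L * u) / u := by
          gcongr
      _ = L * (|Real.log t| + |Real.log z|) + L := by field_simp
  -- tail facts
  have hP0 : (0:ℝ) ≤ (1-z) ^ (α 0 - 1) := Real.rpow_nonneg (by linarith) _
  have hQ0 : (0:ℝ) < z ^ (-(α 0)) := Real.rpow_pos_of_pos hz0 _
  have hW : z * z ^ (-(α 0)) = z ^ (1 - α 0) := by
    rw [show (1 - α 0) = 1 + (-(α 0)) by ring, Real.rpow_add hz0, Real.rpow_one]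
  have hW1 : z ^ (1 - α 0) ≤ 1 := Real.rpow_le_one hz0.le hz1 (by linarith)
  have hWlog : z ^ (1 - α 0) * |Real.log z| ≤ 1 / (1 - α 0) :=
    aux_rpow_mul_abs_log_le (by linarith) hz0 hz1
  have hW0 : (0:ℝ) ≤ z ^ (1 - α 0) := (Real.rpow_pos_of_pos hz0 _).le
  have hA0 : (0:ℝ) ≤ A := (Real.exp_pos _).le
  -- assemble
  rw [abs_mul, abs_mul, abs_mul, abs_mul, abs_of_nonneg hE0, abs_of_pos hz0,
    abs_of_nonneg hP0, abs_of_nonneg hQ0.le]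
  calc u ^ (α 0 - α u) * |(-(α' u)) * Real.log u + (α 0 - α u) / u| * z *
        ((1-z) ^ (α 0 - 1) * z ^ (-(α 0)))
      ≤ A * (L * (|Real.log t| + |Real.log z|) + L) * z *
        ((1-z) ^ (α 0 - 1) * z ^ (-(α 0))) := by
        gcongr
    _ = A * ((L * (|Real.log t| + 1)) * (z * z ^ (-(α 0))) +
          L * ((z * z ^ (-(α 0))) * |Real.log z|)) * (1-z) ^ (α 0 - 1) := by ring
    _ = A * ((L * (|Real.log t| + 1)) * z ^ (1 - α 0) +
          L * (z ^ (1 - α 0) * |Real.log z|)) * (1-z) ^ (α 0 - 1) := by rw [hW]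
    _ ≤ A * ((L * (|Real.log t| + 1)) * 1 + L * (1 / (1 - α 0))) * (1-z) ^ (α 0 - 1) := by
        gcongr
    _ = A * L * (|Real.log t| + (1 / (1 - α 0) + 1)) * (1-z) ^ (α 0 - 1) := by ring

noncomputable def auxF (α : ℝ → ℝ) : ℝ → ℝ → ℝ :=
  fun t z => (t * z) ^ (α 0 - α (t * z)) * (1 - z) ^ (α 0 - 1) * z ^ (-(α 0))

noncomputable def auxF' (α α' : ℝ → ℝ) : ℝ → ℝ → ℝ :=
  fun t z => ((t * z) ^ (α 0 - α (t * z)) *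
      (-(α' (t * z)) * Real.log (t * z) + (α 0 - α (t * z)) / (t * z)) * z) *
    ((1 - z) ^ (α 0 - 1) * z ^ (-(α 0)))

section
variable (b L : ℝ) (α α' : ℝ → ℝ)

-- measurability of auxF x on Ioc 0 1
lemma aux_meas (hb : 0 < b)
    (hα_cont : ContinuousOn α (Icc 0 b))
    (x : ℝ) (hx : 0 < x) (hxb : x ≤ b) :
    AEStronglyMeasurable (auxF α x) (volume.restrict (Set.Ioc (0:ℝ) 1)) := by
  have hmaps : ∀ z ∈ Set.Ioc (0:ℝ) 1, x * z ∈ Icc (0:ℝ) b := by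
    intro z hz
    constructor
    · exact (mul_pos hx hz.1).le
    · nlinarith [hz.1, hz.2]
  have hbase : ContinuousOn (fun z : ℝ => x * z) (Set.Ioc (0:ℝ) 1) :=
    (continuous_const.mul continuous_id).continuousOn
  have hexpo : ContinuousOn (fun z : ℝ => α 0 - α (x * z)) (Set.Ioc (0:ℝ) 1) :=
    continuousOn_const.sub (hα_cont.comp hbase hmaps)
  have hcont : ContinuousOn (fun z : ℝ => (x * z) ^ (α 0 - α (x * z))) (Set.Ioc (0:ℝ) 1) :=
    ContinuousOn.rpow hbase hexpo fun z hz => Or.inl (mul_pos hx hz.1).ne'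
  have hm1 : Measurable fun z : ℝ => (1 - z) ^ (α 0 - 1) := by fun_prop
  have hm2 : Measurable fun z : ℝ => z ^ (-(α 0)) := by fun_prop
  exact ((hcont.aestronglyMeasurable measurableSet_Ioc).mul
    hm1.aestronglyMeasurable).mul hm2.aestronglyMeasurable

end
lemma aux_meas' (b : ℝ) (α α' : ℝ → ℝ)
    (hα_diff : ∀ u ∈ Icc (0:ℝ) b, HasDerivAt α (α' u) u)
    (hα_cont : ContinuousOn α (Icc 0 b))
    (x : ℝ) (hx : 0 < x) (hxb : x < b) :
    AEStronglyMeasurable (auxF' α α' x) (volume.restrict (Set.Ioc (0:ℝ) 1)) := by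
  have hmaps : ∀ z ∈ Set.Ioc (0:ℝ) 1, x * z ∈ Icc (0:ℝ) b := by
    intro z hz
    exact ⟨(mul_pos hx hz.1).le, by nlinarith [hz.1, hz.2]⟩
  have hbase : ContinuousOn (fun z : ℝ => x * z) (Set.Ioc (0:ℝ) 1) :=
    (continuous_const.mul continuous_id).continuousOn
  have hcont1 : ContinuousOn (fun z : ℝ => (x * z) ^ (α 0 - α (x * z))) (Set.Ioc (0:ℝ) 1) :=
    ContinuousOn.rpow hbase (continuousOn_const.sub (hα_cont.comp hbase hmaps))
      fun z hz => Or.inl (mul_pos hx hz.1).ne'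
  have hcont2 : ContinuousOn (fun z : ℝ => (α 0 - α (x * z)) / (x * z)) (Set.Ioc (0:ℝ) 1) :=
    ContinuousOn.div (continuousOn_const.sub (hα_cont.comp hbase hmaps)) hbase
      fun z hz => (mul_pos hx hz.1).ne'
  have hmd : Measurable fun z : ℝ => deriv α (x * z) :=
    (measurable_deriv α).comp (measurable_id.const_mul x)
  have hml : Measurable fun z : ℝ => Real.log (x * z) :=
    Real.measurable_log.comp (measurable_id.const_mul x)
  have hm1 : Measurable fun z : ℝ => (1 - z) ^ (α 0 - 1) := by fun_prop
  have hm2 : Measurable fun z : ℝ => z ^ (-(α 0)) := by fun_prop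
  have hG : AEStronglyMeasurable
      (fun z : ℝ => ((x * z) ^ (α 0 - α (x * z)) *
        (-(deriv α (x * z)) * Real.log (x * z) + (α 0 - α (x * z)) / (x * z)) * z) *
        ((1 - z) ^ (α 0 - 1) * z ^ (-(α 0)))) (volume.restrict (Set.Ioc (0:ℝ) 1)) := by
    refine AEStronglyMeasurable.mul (AEStronglyMeasurable.mul (AEStronglyMeasurable.mul
      (hcont1.aestronglyMeasurable measurableSet_Ioc) ?_)
      measurable_id.aestronglyMeasurable) ((hm1.mul hm2).aestronglyMeasurable)
    exact ((hmd.neg.mul hml).aestronglyMeasurable).add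
      (hcont2.aestronglyMeasurable measurableSet_Ioc)
  refine hG.congr ?_
  rw [Filter.EventuallyEq, ae_restrict_iff' measurableSet_Ioc]
  refine ae_of_all _ fun z hz => ?_
  have hu : x * z ∈ Icc (0:ℝ) b := hmaps z hz
  have : deriv α (x * z) = α' (x * z) := (hα_diff _ hu).deriv
  simp only [auxF', this]

lemma aux_key (b L : ℝ) (hb : 0 < b) (α α' : ℝ → ℝ)
    (hα_diff : ∀ u ∈ Icc (0:ℝ) b, HasDerivAt α (α' u) u)
    (hα_range : ∀ u ∈ Icc (0:ℝ) b, 0 < α u ∧ α u < 1)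
    (hα_lip : ∀ u ∈ Icc (0:ℝ) b, |α' u| ≤ L)
    (t₀ : ℝ) (ht₀ : t₀ ∈ Ioo (0:ℝ) b) :
    HasDerivAt (fun t => ∫ z in (0:ℝ)..1, auxF α t z) (∫ z in (0:ℝ)..1, auxF' α α' t₀ z) t₀ ∧
    |∫ z in (0:ℝ)..1, auxF' α α' t₀ z| ≤
      (Real.exp (L * (1 + b ^ 2)) * L * (|Real.log t₀| + (1 / (1 - α 0) + 1))) *
        ∫ z in (0:ℝ)..1, (1 - z) ^ (α 0 - 1) := by
  obtain ⟨ht₀0, ht₀b⟩ := ht₀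
  have h0b : (0:ℝ) ∈ Icc (0:ℝ) b := ⟨le_refl 0, hb.le⟩
  obtain ⟨hα0pos, hα0lt⟩ := hα_range 0 h0b
  have hL : 0 ≤ L := (abs_nonneg _).trans (hα_lip 0 h0b)
  have hα_cont : ContinuousOn α (Icc 0 b) :=
    fun u hu => ((hα_diff u hu).continuousAt).continuousWithinAt
  have huIoc : Set.uIoc (0:ℝ) 1 = Set.Ioc (0:ℝ) 1 := uIoc_of_le zero_le_one
  set A := Real.exp (L * (1 + b ^ 2)) with hA_def
  have hA0 : (0:ℝ) ≤ A := (Real.exp_pos _).le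
  set C₂ : ℝ := 1 / (1 - α 0) + 1 with hC₂_def
  have hC₂0 : 0 ≤ C₂ := by
    have h1a : (0:ℝ) < 1 - α 0 := by linarith
    have : (0:ℝ) < 1 / (1 - α 0) := by positivity
    simp only [hC₂_def]; linarith
  -- ball setup
  set ε₀ : ℝ := min (t₀ / 2) ((b - t₀) / 2) with hε₀_def
  have hε₀ : 0 < ε₀ := lt_min (by linarith) (by linarith)
  have hball : ∀ x ∈ Metric.ball t₀ ε₀, t₀ / 2 ≤ x ∧ 0 < x ∧ x < b := by
    intro x hx
    rw [Metric.mem_ball, Real.dist_eq, abs_lt] at hx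
    have h1 : ε₀ ≤ t₀ / 2 := min_le_left _ _
    have h2 : ε₀ ≤ (b - t₀) / 2 := min_le_right _ _
    refine ⟨by linarith, by linarith, by linarith⟩
  set Bc : ℝ := |Real.log (t₀ / 2)| + |Real.log b| with hBc_def
  have hlogx : ∀ x, t₀ / 2 ≤ x → x ≤ b → |Real.log x| ≤ Bc := by
    intro x h1 h2
    have hl1 : Real.log (t₀ / 2) ≤ Real.log x := Real.log_le_log (by linarith) h1
    have hl2 : Real.log x ≤ Real.log b := Real.log_le_log (by linarith) h2
    exact (abs_le_max_abs_abs hl1 hl2).trans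
      (max_le (le_add_of_nonneg_right (abs_nonneg _)) (le_add_of_nonneg_left (abs_nonneg _)))
  -- integrable (1-z)^(α0-1)
  have h1m : IntervalIntegrable (fun z : ℝ => (1 - z) ^ (α 0 - 1)) volume 0 1 := by
    have h := aux_beta_integrable (p := (0:ℝ)) (q := α 0 - 1) (by norm_num) (by linarith)
    simpa only [Real.rpow_zero, one_mul] using h
  -- dominated convergence theorem application
  have key := intervalIntegral.hasDerivAt_integral_of_dominated_loc_of_deriv_le
    (F := auxF α) (F' := auxF' α α') (x₀ := t₀) (a := 0) (b := 1) (μ := volume)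
    (bound := fun z => (A * L * (Bc + C₂)) * (1 - z) ^ (α 0 - 1)) (Metric.ball_mem_nhds t₀ hε₀)
    (by -- hF_meas
      filter_upwards [Metric.ball_mem_nhds t₀ hε₀] with x hx
      obtain ⟨h1, h2, h3⟩ := hball x hx
      rw [huIoc]
      exact aux_meas b α hb hα_cont x h2 h3.le)
    (by -- hF_int
      have hbeta := (aux_beta_integrable (p := -(α 0)) (q := α 0 - 1)
        (by linarith) (by linarith)).const_mul A
      refine hbeta.mono_fun (by rw [huIoc]; exact aux_meas b α hb hα_cont t₀ ht₀0 ht₀b.le) ?_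
      filter_upwards [ae_restrict_mem measurableSet_uIoc] with z hz
      rw [huIoc] at hz
      obtain ⟨hz0, hz1⟩ := hz
      have hu : 0 < t₀ * z := mul_pos ht₀0 hz0
      have hub : t₀ * z ≤ b := by nlinarith
      have huI : t₀ * z ∈ Icc (0:ℝ) b := ⟨hu.le, hub⟩
      have hlip : |α 0 - α (t₀ * z)| ≤ L * (t₀ * z) := by
        have h := Convex.norm_image_sub_le_of_norm_hasDerivWithin_le
          (f := α) (f' := α') (s := Icc (0:ℝ) b)
          (fun x hx => (hα_diff x hx).hasDerivWithinAt)
          (fun x hx => by simpa using hα_lip x hx) (convex_Icc 0 b) h0b huI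
        rw [Real.norm_eq_abs, Real.norm_eq_abs, abs_sub_comm] at h
        simpa [abs_of_nonneg hu.le] using h
      have hexp_bound : (t₀ * z) ^ (α 0 - α (t₀ * z)) ≤ A := by
        rw [Real.rpow_def_of_pos hu]
        apply Real.exp_le_exp.2
        calc Real.log (t₀ * z) * (α 0 - α (t₀ * z))
            ≤ |Real.log (t₀ * z) * (α 0 - α (t₀ * z))| := le_abs_self _
          _ = |α 0 - α (t₀ * z)| * |Real.log (t₀ * z)| := by rw [abs_mul]; ring
          _ ≤ (L * (t₀ * z)) * |Real.log (t₀ * z)| :=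
              mul_le_mul_of_nonneg_right hlip (abs_nonneg _)
          _ = L * ((t₀ * z) * |Real.log (t₀ * z)|) := by ring
          _ ≤ L * (1 + b ^ 2) := mul_le_mul_of_nonneg_left (aux_mul_abs_log_le hu hub) hL
      have hE0 : (0:ℝ) ≤ (t₀ * z) ^ (α 0 - α (t₀ * z)) := Real.rpow_nonneg hu.le _
      have hP0 : (0:ℝ) ≤ (1 - z) ^ (α 0 - 1) := Real.rpow_nonneg (by linarith) _
      have hQ0 : (0:ℝ) ≤ z ^ (-(α 0)) := Real.rpow_nonneg hz0.le _
      simp only [auxF, Real.norm_eq_abs]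
      rw [abs_mul, abs_mul, abs_of_nonneg hE0, abs_of_nonneg hP0, abs_of_nonneg hQ0,
        abs_of_nonneg (by positivity : (0:ℝ) ≤ A * (z ^ (-(α 0)) * (1 - z) ^ (α 0 - 1)))]
      calc (t₀ * z) ^ (α 0 - α (t₀ * z)) * (1 - z) ^ (α 0 - 1) * z ^ (-(α 0))
          ≤ A * (1 - z) ^ (α 0 - 1) * z ^ (-(α 0)) := by gcongr
        _ = A * (z ^ (-(α 0)) * (1 - z) ^ (α 0 - 1)) := by ring)
    (by -- hF'_meas
      rw [huIoc]
      exact aux_meas' b α α' hα_diff hα_cont t₀ ht₀0 ht₀b)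
    (by -- h_bound
      refine ae_of_all _ fun z hz => ?_
      rw [huIoc] at hz
      intro x hx
      obtain ⟨h1, h2, h3⟩ := hball x hx
      have hest := aux_est b L hb α α' hα_diff hα_range hα_lip z x hz.1 hz.2 h2 h3.le
      simp only [Real.norm_eq_abs, auxF']
      refine hest.trans ?_
      have hP0 : (0:ℝ) ≤ (1 - z) ^ (α 0 - 1) := Real.rpow_nonneg (by linarith [hz.2]) _
      have hx_log : |Real.log x| ≤ Bc := hlogx x h1 h3.le
      calc A * L * (|Real.log x| + (1 / (1 - α 0) + 1)) * (1 - z) ^ (α 0 - 1)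
          ≤ A * L * (Bc + C₂) * (1 - z) ^ (α 0 - 1) := by
            have : |Real.log x| + (1 / (1 - α 0) + 1) ≤ Bc + C₂ := by
              simp only [hC₂_def]
              exact add_le_add_left hx_log _
            exact mul_le_mul_of_nonneg_right
              (mul_le_mul_of_nonneg_left this (by positivity)) hP0
        _ = A * L * (Bc + C₂) * (1 - z) ^ (α 0 - 1) := rfl)
    (h1m.const_mul _)
    (by -- h_diff
      refine ae_of_all _ fun z hz => ?_
      rw [huIoc] at hz
      intro x hx
      obtain ⟨h1, h2, h3⟩ := hball x hx
      exact aux_hasDeriv b α α' hα_diff z x hz.1 hz.2 h2 h3.le)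
  refine ⟨key.2, ?_⟩
  -- the bound at t₀
  have hbnd := intervalIntegral.norm_integral_le_abs_of_norm_le
    (f := auxF' α α' t₀) (μ := volume) (a := 0) (b := 1)
    (g := fun z => (A * L * (|Real.log t₀| + C₂)) * (1 - z) ^ (α 0 - 1))
    (by
      filter_upwards [ae_restrict_mem measurableSet_uIoc] with z hz
      rw [huIoc] at hz
      have hest := aux_est b L hb α α' hα_diff hα_range hα_lip z t₀ hz.1 hz.2 ht₀0 ht₀b.le
      simp only [Real.norm_eq_abs, auxF']
      calc _ ≤ _ := hest
        _ = A * L * (|Real.log t₀| + C₂) * (1 - z) ^ (α 0 - 1) := rfl)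
    (h1m.const_mul _)
  rw [Real.norm_eq_abs] at hbnd
  have hI₁0 : 0 ≤ ∫ z in (0:ℝ)..1, (1 - z) ^ (α 0 - 1) :=
    intervalIntegral.integral_nonneg zero_le_one
      fun z hz => Real.rpow_nonneg (by linarith [hz.2]) _
  calc |∫ z in (0:ℝ)..1, auxF' α α' t₀ z|
      ≤ |∫ z in (0:ℝ)..1, (A * L * (|Real.log t₀| + C₂)) * (1 - z) ^ (α 0 - 1)| := hbnd
    _ = |(A * L * (|Real.log t₀| + C₂)) * ∫ z in (0:ℝ)..1, (1 - z) ^ (α 0 - 1)| := by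
        rw [intervalIntegral.integral_const_mul]
    _ = (A * L * (|Real.log t₀| + C₂)) * ∫ z in (0:ℝ)..1, (1 - z) ^ (α 0 - 1) := by
        rw [abs_of_nonneg (mul_nonneg (by positivity) hI₁0)]
    _ = (A * L * (|Real.log t₀| + (1 / (1 - α 0) + 1))) * ∫ z in (0:ℝ)..1, (1 - z) ^ (α 0 - 1) :=
        rfl

/-- with `κ = Γ(α 0) Γ(1 - α 0)`, the function
`g t = (1/κ) ∫₀¹ (tz)^(α 0 - α (tz)) (1-z)^(α 0 - 1) z^(-α 0) dz`
is differentiable on `(0,b)`, for each `0 < ε < 1 - α 0` there is `C_ε > 0` with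
`|g' t| ≤ C_ε t^(-ε)` on `(0,b)`, and `g' ∈ L¹(0,b)`. -/
theorem stmt2 (b L : ℝ) (hb : 0 < b) (α α' : ℝ → ℝ)
    (hα_diff : ∀ t ∈ Icc (0:ℝ) b, HasDerivAt α (α' t) t)
    (hα_range : ∀ t ∈ Icc (0:ℝ) b, 0 < α t ∧ α t < 1)
    (hα_lip : ∀ t ∈ Icc (0:ℝ) b, |α' t| ≤ L)
    (g : ℝ → ℝ)
    (hg : ∀ t : ℝ, g t = (1 / (Real.Gamma (α 0) * Real.Gamma (1 - α 0))) *
      ∫ z in (0:ℝ)..1, (t * z) ^ (α 0 - α (t * z)) * (1 - z) ^ (α 0 - 1) * z ^ (-(α 0))) :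
    (∀ t ∈ Ioo (0:ℝ) b, DifferentiableAt ℝ g t) ∧
    (∀ ε : ℝ, 0 < ε → ε < 1 - α 0 → ∃ C : ℝ, 0 < C ∧
      ∀ t ∈ Ioo (0:ℝ) b, |deriv g t| ≤ C * t ^ (-ε)) ∧
    IntegrableOn (deriv g) (Ioo 0 b) := by
  have h0b : (0:ℝ) ∈ Icc (0:ℝ) b := ⟨le_refl 0, hb.le⟩
  obtain ⟨hα0pos, hα0lt⟩ := hα_range 0 h0b
  set c : ℝ := 1 / (Real.Gamma (α 0) * Real.Gamma (1 - α 0)) with hc_def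
  have hgfun : g = fun t => c * ∫ z in (0:ℝ)..1, auxF α t z := funext fun t => hg t
  set A := Real.exp (L * (1 + b ^ 2)) with hA_def
  set C₂ : ℝ := 1 / (1 - α 0) + 1 with hC₂_def
  have hC₂0 : 0 ≤ C₂ := by
    have h1a : (0:ℝ) < 1 - α 0 := by linarith
    have : (0:ℝ) < 1 / (1 - α 0) := by positivity
    simp only [hC₂_def]; linarith
  set I₁ : ℝ := ∫ z in (0:ℝ)..1, (1 - z) ^ (α 0 - 1) with hI₁_def
  have hI₁0 : 0 ≤ I₁ :=
    intervalIntegral.integral_nonneg zero_le_one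
      fun z hz => Real.rpow_nonneg (by linarith [hz.2]) _
  set K : ℝ := |c| * A * L * I₁ with hK_def
  have hL : 0 ≤ L := (abs_nonneg _).trans (hα_lip 0 h0b)
  have hK0 : 0 ≤ K := by positivity
  -- main derivative facts
  have main : ∀ t ∈ Ioo (0:ℝ) b, DifferentiableAt ℝ g t ∧
      |deriv g t| ≤ K * (|Real.log t| + C₂) := by
    intro t ht
    obtain ⟨hHD, hbound⟩ := aux_key b L hb α α' hα_diff hα_range hα_lip t ht
    have hgD : HasDerivAt g (c * ∫ z in (0:ℝ)..1, auxF' α α' t z) t := by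
      rw [hgfun]
      exact hHD.const_mul c
    refine ⟨hgD.differentiableAt, ?_⟩
    rw [hgD.deriv, abs_mul]
    calc |c| * |∫ z in (0:ℝ)..1, auxF' α α' t z|
        ≤ |c| * ((A * L * (|Real.log t| + C₂)) * I₁) :=
          mul_le_mul_of_nonneg_left hbound (abs_nonneg c)
      _ = K * (|Real.log t| + C₂) := by simp only [hK_def]; ring
  -- part 2
  have part2 : ∀ ε : ℝ, 0 < ε → ε < 1 - α 0 → ∃ C : ℝ, 0 < C ∧
      ∀ t ∈ Ioo (0:ℝ) b, |deriv g t| ≤ C * t ^ (-ε) := by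
    intro ε hε hε1
    refine ⟨K * (1 / ε + (b + C₂) * (1 + b ^ ε)) + 1, ?_, ?_⟩
    · have h1 : (0:ℝ) ≤ b ^ ε := Real.rpow_nonneg hb.le ε
      have h2 : (0:ℝ) < 1 / ε := by positivity
      have h3 : 0 ≤ K * (1 / ε + (b + C₂) * (1 + b ^ ε)) := by
        apply mul_nonneg hK0
        have h5 : (0:ℝ) ≤ (b + C₂) * (1 + b ^ ε) := by positivity
        exact add_nonneg h2.le h5
      linarith
    · intro t ht
      obtain ⟨ht0, htb⟩ := ht
      have htp : 0 < t ^ (-ε) := Real.rpow_pos_of_pos ht0 _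
      have hbe : (0:ℝ) ≤ b ^ ε := Real.rpow_nonneg hb.le ε
      have hM : 1 ≤ (1 + b ^ ε) * t ^ (-ε) := by
        rcases le_or_gt t 1 with h | h
        · have h1 : (1:ℝ) ≤ t ^ (-ε) :=
            Real.one_le_rpow_of_pos_of_le_one_of_nonpos ht0 h (by linarith)
          nlinarith
        · have h2 : b ^ (-ε) ≤ t ^ (-ε) :=
            Real.rpow_le_rpow_of_nonpos ht0 htb.le (by linarith)
          have h3 : b ^ ε * b ^ (-ε) = 1 := by
            rw [← Real.rpow_add hb]; simp
          nlinarith [Real.rpow_nonneg hb.le (-ε)]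
      have hlogle : |Real.log t| ≤ t ^ (-ε) / ε + b := by
        rcases le_or_gt t 1 with h | h
        · rw [abs_of_nonpos (Real.log_nonpos ht0.le h)]
          have h1 : Real.log t⁻¹ ≤ (t⁻¹) ^ ε / ε :=
            Real.log_le_rpow_div (by positivity) hε
          rw [Real.log_inv, Real.inv_rpow ht0.le] at h1
          have h2 : (t ^ ε)⁻¹ = t ^ (-ε) := by
            rw [← Real.rpow_neg ht0.le]
          rw [h2] at h1
          linarith
        · rw [abs_of_nonneg (Real.log_nonneg h.le)]
          have h1 : Real.log t ≤ Real.log b := Real.log_le_log ht0 htb.le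
          have h2 : Real.log b ≤ b := (Real.log_le_sub_one_of_pos hb).trans (by linarith)
          have h3 : 0 ≤ t ^ (-ε) / ε := by positivity
          linarith
      have hstep : |Real.log t| + C₂ ≤ (1 / ε + (b + C₂) * (1 + b ^ ε)) * t ^ (-ε) := by
        have h4 : b + C₂ ≤ (b + C₂) * ((1 + b ^ ε) * t ^ (-ε)) :=
          le_mul_of_one_le_right (by positivity) hM
        calc |Real.log t| + C₂ ≤ (t ^ (-ε) / ε + b) + C₂ := by linarith
          _ ≤ t ^ (-ε) / ε + (b + C₂) * ((1 + b ^ ε) * t ^ (-ε)) := by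
              rw [add_assoc]
              exact add_le_add_right h4 _
          _ = (1 / ε + (b + C₂) * (1 + b ^ ε)) * t ^ (-ε) := by ring
      calc |deriv g t| ≤ K * (|Real.log t| + C₂) := (main t ⟨ht0, htb⟩).2
        _ ≤ K * ((1 / ε + (b + C₂) * (1 + b ^ ε)) * t ^ (-ε)) :=
            mul_le_mul_of_nonneg_left hstep hK0
        _ = (K * (1 / ε + (b + C₂) * (1 + b ^ ε))) * t ^ (-ε) := by ring
        _ ≤ (K * (1 / ε + (b + C₂) * (1 + b ^ ε)) + 1) * t ^ (-ε) := by nlinarith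
  refine ⟨fun t ht => (main t ht).1, part2, ?_⟩
  -- part 3
  set ε₁ : ℝ := (1 - α 0) / 2 with hε₁_def
  have hε₁0 : 0 < ε₁ := by simp only [hε₁_def]; linarith
  have hε₁1 : ε₁ < 1 - α 0 := by simp only [hε₁_def]; linarith
  obtain ⟨C, hC0, hCb⟩ := part2 ε₁ hε₁0 hε₁1
  have hdom : IntegrableOn (fun t : ℝ => C * t ^ (-ε₁)) (Ioo 0 b) := by
    have h := (intervalIntegrable_rpow' (a := 0) (b := b)
      (show (-1:ℝ) < -ε₁ by simp only [hε₁_def]; linarith)).const_mul C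
    rw [intervalIntegrable_iff, uIoc_of_le hb.le] at h
    exact h.mono_set Ioo_subset_Ioc_self
  refine Integrable.mono hdom ((measurable_deriv g).aestronglyMeasurable) ?_
  filter_upwards [ae_restrict_mem measurableSet_Ioo] with t ht
  rw [Real.norm_eq_abs, Real.norm_eq_abs]
  exact (hCb t ht).trans (le_abs_self _)
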